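/- Let L = GF(2^m), σ = 2^s with m/gcd(m,s) odd, K_1 the fixed field of σ in L, p_4 ∈ L such that X^{σ+1} + X + p_4 has no root in L, and f(X) = p_4^σ X^{σ²} + X^σ + p_4 X. Then f : L → L is an invertible F_2-linear map. -/

import Mathlib

theorem stmt_16 (m s : ℕ) (hm : 1 ≤ m) (hodd : Odd (m / Nat.gcd m s))
    (L : Type) [Field L] [Fintype L] (hL : Fintype.card L = 2 ^ m)
    (p4 : L) (hp4 : ∀ x : L, x ^ (2 ^ s + 1) + x + p4 ≠ 0) :
    Function.Bijective
      (fun x : L => p4 ^ (2 ^ s) * x ^ (2 ^ (2 * s)) + x ^ (2 ^ s) + p4 * x) := by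
  have hp40 : p4 ≠ 0 := by
    intro h
    exact hp4 0 (by simp [h])
  -- characteristic 2
  obtain ⟨p, hp⟩ := CharP.exists L
  haveI := hp
  obtain ⟨n, hprime, hn⟩ := FiniteField.card L p
  have hp2 : p = 2 := by
    have hd : p ∣ 2 ^ m := by
      rw [hL] at hn
      exact hn ▸ dvd_pow_self p (by exact_mod_cast n.ne_zero)
    have := hprime.dvd_of_dvd_pow hd
    exact (Nat.prime_dvd_prime_iff_eq hprime Nat.prime_two).mp this
  subst hp2
  haveI : Fact (Nat.Prime 2) := ⟨Nat.prime_two⟩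
  set q : ℕ := 2 ^ s with hq
  -- kernel trivial
  have hker : ∀ x : L, p4 ^ q * x ^ (2 ^ (2 * s)) + x ^ q + p4 * x = 0 → x = 0 := by
    intro x hx
    by_contra hx0
    set t : L := x ^ q * x⁻¹ with ht
    have htx : x ^ q = t * x := by rw [ht, mul_assoc, inv_mul_cancel₀ hx0, mul_one]
    have hxq : x ^ (2 ^ (2 * s)) = t ^ q * (t * x) := by
      rw [two_mul, pow_add, pow_mul, ← hq, htx, mul_pow, htx]
    have key : p4 ^ q * t ^ (q + 1) + t + p4 = 0 := by
      have hx' : x * (p4 ^ q * t ^ (q + 1) + t + p4) = 0 := by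
        rw [← hx, hxq, htx]; ring
      rcases mul_eq_zero.mp hx' with h | h
      · exact absurd h hx0
      · exact h
    have key2 : (p4 * t) ^ (q + 1) + p4 * t + p4 ^ 2 = 0 := by
      calc (p4 * t) ^ (q + 1) + p4 * t + p4 ^ 2
          = (p4 ^ q * t ^ (q + 1) + t + p4) * p4 := by
            rw [mul_pow, pow_succ]; ring
        _ = 0 := by rw [key, zero_mul]
    obtain ⟨z, hz⟩ := surjective_frobenius L 2 (p4 * t)
    have hz2 : z ^ 2 = p4 * t := hz
    have hsq : (z ^ (q + 1) + z + p4) ^ 2 = 0 := by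
      have : (z ^ (q + 1) + z + p4) ^ 2
          = (z ^ 2) ^ (q + 1) + z ^ 2 + p4 ^ 2 := by
        rw [add_pow_char, add_pow_char, ← pow_mul, mul_comm (q + 1) 2, pow_mul]
      rw [this, hz2, key2]
    exact hp4 z (pow_eq_zero_iff (two_ne_zero : (2 : ℕ) ≠ 0) |>.mp hsq)
  -- injective implies bijective
  rw [← Finite.injective_iff_bijective]
  intro a b hab
  simp only at hab
  have hsum : p4 ^ q * (a + b) ^ (2 ^ (2 * s)) + (a + b) ^ q + p4 * (a + b) = 0 := by
    rw [hq, add_pow_char_pow, add_pow_char_pow]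
    have h2 : p4 ^ q * a ^ (2 ^ (2 * s)) + a ^ q + p4 * a
        = p4 ^ q * b ^ (2 ^ (2 * s)) + b ^ q + p4 * b := hab
    have : (p4 ^ q * a ^ (2 ^ (2 * s)) + a ^ q + p4 * a)
        + (p4 ^ q * b ^ (2 ^ (2 * s)) + b ^ q + p4 * b) = 0 := by
      rw [h2]; exact CharTwo.add_self_eq_zero _
    calc p4 ^ (2 ^ s) * (a ^ 2 ^ (2 * s) + b ^ 2 ^ (2 * s)) + (a ^ 2 ^ s + b ^ 2 ^ s)
          + p4 * (a + b)
        = (p4 ^ q * a ^ (2 ^ (2 * s)) + a ^ q + p4 * a)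
          + (p4 ^ q * b ^ (2 ^ (2 * s)) + b ^ q + p4 * b) := by rw [hq]; ring
      _ = 0 := this
  have := hker (a + b) hsum
  have hsub : a - b = 0 := by rw [CharTwo.sub_eq_add]; exact this
  exact sub_eq_zero.mp hsub
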